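/- arXiv:2506.19485 — 5 statements merged into one kernel-verified Lean document; each statement's English description precedes it below -/
import Mathlib

section
/- Let d, s, k, m, V be positive integers with d ≥ 1, k ≤ s, k ≤ m and s ≤ V. Then (V choose s) · (m choose k)^d · (k/m)^(d·s) ≤ exp( −s·( d·(1 − k/s)·log(m/k) − log(V/s) − 2d ) ), where k/s, m/k, V/s and k/m are real quotients. -/
/-- Standard bound: `n.choose k ≤ (e n / k)^k`, in exponential form. -/
lemma choose_le_exp_bound (n k : ℕ) (hk : 0 < k) (hkn : k ≤ n) :
    (n.choose k : ℝ) ≤ Real.exp ((k : ℝ) * Real.log ((n : ℝ) / k) + k) := by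
  have hk0 : (0 : ℝ) < k := by exact_mod_cast hk
  have hn0 : (0 : ℝ) < n := by exact_mod_cast hk.trans_le hkn
  have h1 : (n.choose k : ℝ) ≤ (n : ℝ) ^ k / (k.factorial : ℝ) :=
    Nat.choose_le_pow_div k n
  have h2 : ((k : ℝ)) ^ k / (k.factorial : ℝ) ≤ Real.exp k :=
    Real.pow_div_factorial_le_exp (k:ℝ) hk0.le k
  have key : (n : ℝ) ^ k / (k.factorial : ℝ) ≤ ((n : ℝ) / k) ^ k * Real.exp k := by
    have heq : (n : ℝ) ^ k / (k.factorial : ℝ)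
        = ((n : ℝ) / k) ^ k * ((k : ℝ) ^ k / (k.factorial : ℝ)) := by
      field_simp
      rw [div_pow, div_mul_cancel₀ _ (pow_ne_zero _ hk0.ne')]
    rw [heq]
    exact mul_le_mul_of_nonneg_left h2 (by positivity)
  have hexp : Real.exp ((k : ℝ) * Real.log ((n : ℝ) / k) + k)
      = ((n : ℝ) / k) ^ k * Real.exp k := by
    rw [Real.exp_add, Real.exp_nat_mul,
      Real.exp_log (by positivity)]
  rw [hexp]
  exact h1.trans key

/-- The core counting estimate in the proof of the strip-covering proposition. -/
theorem union_bound_counting (d s k m V : ℕ) (hd : 1 ≤ d)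
    (hs : 0 < s) (hk : 0 < k) (hm : 0 < m) (hV : 0 < V)
    (hks : k ≤ s) (hkm : k ≤ m) (hsV : s ≤ V) :
    (V.choose s : ℝ) * (m.choose k : ℝ) ^ d * ((k : ℝ) / m) ^ (d * s) ≤
      Real.exp (-(s : ℝ) *
        ((d : ℝ) * (1 - (k : ℝ) / s) * Real.log ((m : ℝ) / k)
          - Real.log ((V : ℝ) / s) - 2 * d)) := by
  have hk0 : (0 : ℝ) < k := by exact_mod_cast hk
  have hs0 : (0 : ℝ) < s := by exact_mod_cast hs
  have hm0 : (0 : ℝ) < m := by exact_mod_cast hm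
  have hV0 : (0 : ℝ) < V := by exact_mod_cast hV
  have hd1 : (1 : ℝ) ≤ d := by exact_mod_cast hd
  have hks' : (k : ℝ) ≤ s := by exact_mod_cast hks
  have hA := choose_le_exp_bound V s hs hsV
  have hB := choose_le_exp_bound m k hk hkm
  have hBd : ((m.choose k : ℝ)) ^ d
      ≤ Real.exp ((d : ℝ) * ((k : ℝ) * Real.log ((m : ℝ) / k) + k)) := by
    rw [Real.exp_nat_mul]
    exact pow_le_pow_left₀ (by positivity) hB d
  have hC : ((k : ℝ) / m) ^ (d * s)
      = Real.exp (-((d : ℝ) * s * Real.log ((m : ℝ) / k))) := by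
    have hlog : Real.log ((k : ℝ) / m) = -Real.log ((m : ℝ) / k) := by
      rw [Real.log_div hk0.ne' hm0.ne', Real.log_div hm0.ne' hk0.ne']; ring
    rw [← Real.exp_log (show (0:ℝ) < ((k : ℝ) / m) ^ (d * s) by positivity),
      Real.log_pow, hlog]
    push_cast
    ring_nf
  calc (V.choose s : ℝ) * (m.choose k : ℝ) ^ d * ((k : ℝ) / m) ^ (d * s)
      ≤ Real.exp ((s : ℝ) * Real.log ((V : ℝ) / s) + s) *
        Real.exp ((d : ℝ) * ((k : ℝ) * Real.log ((m : ℝ) / k) + k)) *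
        Real.exp (-((d : ℝ) * s * Real.log ((m : ℝ) / k))) := by
        rw [hC]
        exact mul_le_mul (mul_le_mul hA hBd (by positivity) (Real.exp_pos _).le)
          le_rfl (Real.exp_pos _).le (by positivity)
    _ ≤ Real.exp (-(s : ℝ) *
        ((d : ℝ) * (1 - (k : ℝ) / s) * Real.log ((m : ℝ) / k)
          - Real.log ((V : ℝ) / s) - 2 * d)) := by
        rw [← Real.exp_add, ← Real.exp_add, Real.exp_le_exp]
        have hss : (s : ℝ) * ((k : ℝ) / s) = k := by field_simp
        have hL : (0 : ℝ) ≤ Real.log ((m : ℝ) / k) :=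
          Real.log_nonneg (by rw [le_div_iff₀ hk0]; exact_mod_cast by simpa using hkm)
        have h1 : (s : ℝ) + (d : ℝ) * k ≤ 2 * d * s := by nlinarith
        nlinarith [mul_le_mul_of_nonneg_right hd1 hL]
end

section
/- Let d, s, k, m, V be positive integers with d ≥ 1, 2k ≤ s, k ≤ m and s ≤ V, and suppose (m/k)^(d/2) ≥ e^(2d+1) · (V/s) (real quotients and powers). Then (V choose s) · (m choose k)^d · (k/m)^(d·s) ≤ e^(−s). -/
lemma choose_le_exp_pow (n k : ℕ) (hk : 0 < k) :
    (n.choose k : ℝ) ≤ (Real.exp 1 * n / k) ^ k := by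
  have h1 : (n.choose k : ℝ) ≤ (n ^ k : ℝ) / (k.factorial) := Nat.choose_le_pow_div k n
  have h2 : ((k : ℝ)) ^ k / (k.factorial) ≤ Real.exp k := Real.pow_div_factorial_le_exp (k:ℝ) (Nat.cast_nonneg k) k
  have hkpos : (0:ℝ) < k := by exact_mod_cast hk
  have hfac : (0:ℝ) < (k.factorial) := by exact_mod_cast k.factorial_pos
  calc (n.choose k : ℝ) ≤ (n ^ k : ℝ) / (k.factorial) := h1
    _ = ((n : ℝ) / k) ^ k * ((k:ℝ) ^ k / (k.factorial)) := by
        field_simp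
        rw [div_pow, div_mul_cancel₀ _ (pow_ne_zero _ hkpos.ne')]
    _ ≤ ((n : ℝ) / k) ^ k * Real.exp k := by
        gcongr
    _ = (Real.exp 1 * n / k) ^ k := by
        rw [← Real.exp_one_pow, mul_div_assoc, mul_pow, mul_comm]

/-- Quantitative corollary of the core counting estimate: in the regime
`(m/k)^(d/2) ≥ e^(2d+1)·(V/s)`, the union-bound probability is at most `e^(−s)`. -/
theorem union_bound_counting_exp (d s k m V : ℕ) (hd : 1 ≤ d)
    (hs : 0 < s) (hk : 0 < k) (hm : 0 < m) (hV : 0 < V)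
    (hks : 2 * k ≤ s) (hkm : k ≤ m) (hsV : s ≤ V)
    (hreg : Real.exp (2 * d + 1) * ((V : ℝ) / s) ≤ ((m : ℝ) / k) ^ ((d : ℝ) / 2)) :
    (V.choose s : ℝ) * (m.choose k : ℝ) ^ d * ((k : ℝ) / m) ^ (d * s) ≤
      Real.exp (-(s : ℝ)) := by
  have hkR : (0:ℝ) < k := by exact_mod_cast hk
  have hmR : (0:ℝ) < m := by exact_mod_cast hm
  have hsR : (0:ℝ) < s := by exact_mod_cast hs
  have hVR : (0:ℝ) < V := by exact_mod_cast hV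
  have hdR : (1:ℝ) ≤ d := by exact_mod_cast hd
  have hkmR : (k:ℝ) ≤ m := by exact_mod_cast hkm
  have hone : (1:ℝ) ≤ (m:ℝ)/k := (one_le_div hkR).mpr hkmR
  set L : ℝ := Real.log ((m:ℝ)/k) with hL
  have hL0 : 0 ≤ L := Real.log_nonneg hone
  -- log of hreg
  have hmk : (0:ℝ) < (m:ℝ)/k := by positivity
  have hreglog : (2*(d:ℝ) + 1) + Real.log ((V:ℝ)/s) ≤ ((d:ℝ)/2) * L := by
    have h := Real.log_le_log (by positivity) hreg
    rwa [Real.log_mul (Real.exp_pos _).ne' (by positivity), Real.log_exp,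
      Real.log_rpow hmk] at h
  have hCV : (0:ℝ) < V.choose s := by exact_mod_cast Nat.choose_pos hsV
  have hCm : (0:ℝ) < m.choose k := by exact_mod_cast Nat.choose_pos hkm
  have hLHS : (0:ℝ) < (V.choose s : ℝ) * (m.choose k : ℝ) ^ d * ((k : ℝ) / m) ^ (d * s) := by
    positivity
  rw [← Real.log_le_iff_le_exp hLHS]
  rw [Real.log_mul (by positivity) (by positivity), Real.log_mul hCV.ne' (by positivity),
    Real.log_pow, Real.log_pow]
  have hlogkm : Real.log ((k:ℝ)/m) = -L := by
    rw [hL, ← Real.log_inv, inv_div]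
  rw [hlogkm]
  have hbV : Real.log (V.choose s : ℝ) ≤ s * (1 + Real.log ((V:ℝ)/s)) := by
    calc Real.log (V.choose s : ℝ) ≤ Real.log ((Real.exp 1 * V / s) ^ s) :=
          Real.log_le_log hCV (choose_le_exp_pow V s hs)
      _ = s * (1 + Real.log ((V:ℝ)/s)) := by
          rw [Real.log_pow, mul_div_assoc, Real.log_mul (Real.exp_pos _).ne' (by positivity),
            Real.log_exp]
  have hbm : Real.log (m.choose k : ℝ) ≤ k * (1 + L) := by
    calc Real.log (m.choose k : ℝ) ≤ Real.log ((Real.exp 1 * m / k) ^ k) :=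
          Real.log_le_log hCm (choose_le_exp_pow m k hk)
      _ = k * (1 + L) := by
          rw [Real.log_pow, mul_div_assoc, Real.log_mul (Real.exp_pos _).ne' (by positivity),
            Real.log_exp, hL]
  have hksR : 2*(k:ℝ) ≤ s := by exact_mod_cast hks
  have hcast : ((d*s : ℕ) : ℝ) = (d:ℝ)*(s:ℝ) := by push_cast; ring
  rw [hcast]
  have h1 : (d:ℝ) * Real.log (m.choose k : ℝ) ≤ d * (k * (1+L)) := by
    have : (0:ℝ) ≤ d := by linarith
    exact mul_le_mul_of_nonneg_left hbm this
  have key : (s:ℝ) * (1 + Real.log ((V:ℝ)/s)) + d*(k*(1+L)) + (d:ℝ)*s*(-L) ≤ -s := by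
    nlinarith [mul_le_mul_of_nonneg_left hreglog hsR.le,
      mul_le_mul_of_nonneg_right hksR (mul_nonneg (by linarith : (0:ℝ) ≤ (d:ℝ)) hL0),
      mul_pos hsR (by linarith : (0:ℝ) < (d:ℝ))]
  linarith [hbV, h1]
end

section
/- Let d, n, m, s, k be positive integers with k ≤ m and s ≤ n, and let μ be the product, over all pairs (t, i) with t ∈ {1, …, n} and i ∈ {1, …, d}, of the uniform probability measure on [0,1); write a sample point as x = (x_{t,i}). Then the μ-measure of the set of x for which there exists a subset T ⊆ {1, …, n} with |T| = s such that for every coordinate i ∈ {1, …, d} the set of strip indices {⌊m · x_{t,i}⌋ : t ∈ T} has at most k elements, is at most (n choose s) · (m choose k)^d · (k/m)^(d·s). -/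
open MeasureTheory

open Set

lemma strip_eq (m : ℕ) (hm : 0 < m) (a : ℤ) :
    {u : ℝ | ⌊(m : ℝ) * u⌋ = a} = Set.Ico ((a : ℝ) / m) (((a : ℝ) + 1) / m) := by
  have hm' : (0:ℝ) < m := by exact_mod_cast hm
  ext u
  simp only [Set.mem_setOf_eq, Set.mem_Ico, Int.floor_eq_iff, div_le_iff₀ hm', lt_div_iff₀ hm']
  constructor <;> intro h <;> constructor <;> push_cast at * <;> nlinarith [h.1, h.2]

lemma stripSet_eq (m : ℕ) (hm : 0 < m) (S : Finset ℤ) :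
    {u : ℝ | ⌊(m:ℝ) * u⌋ ∈ S} = ⋃ a ∈ S, Set.Ico ((a : ℝ) / m) (((a : ℝ) + 1) / m) := by
  ext u
  simp only [Set.mem_setOf_eq, Set.mem_iUnion, exists_prop]
  constructor
  · intro h
    refine ⟨⌊(m:ℝ)*u⌋, h, ?_⟩
    rw [← strip_eq m hm]
    exact rfl
  · rintro ⟨a, ha, hu⟩
    rw [← strip_eq m hm] at hu
    rwa [hu]

lemma stripSet_measurable (m : ℕ) (hm : 0 < m) (S : Finset ℤ) :
    MeasurableSet {u : ℝ | ⌊(m:ℝ) * u⌋ ∈ S} := by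
  rw [stripSet_eq m hm]
  exact MeasurableSet.biUnion S.countable_toSet fun a _ => measurableSet_Ico

lemma measure_stripSet (m : ℕ) (hm : 0 < m) (S : Finset ℤ)
    (hS : S ⊆ Finset.Ico (0:ℤ) (m:ℤ)) :
    (volume.restrict (Set.Ico (0:ℝ) 1)) {u : ℝ | ⌊(m:ℝ) * u⌋ ∈ S} =
      ENNReal.ofReal ((S.card : ℝ) / m) := by
  have hm' : (0:ℝ) < m := by exact_mod_cast hm
  have hsub : {u : ℝ | ⌊(m:ℝ) * u⌋ ∈ S} ⊆ Set.Ico (0:ℝ) 1 := by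
    rw [stripSet_eq m hm]
    intro u hu
    simp only [Set.mem_iUnion, exists_prop] at hu
    obtain ⟨a, haS, hu⟩ := hu
    have ha := Finset.mem_Ico.mp (hS haS)
    have h0 : (0:ℝ) ≤ (a:ℝ) := by exact_mod_cast ha.1
    have h1 : ((a:ℝ) + 1) ≤ (m:ℝ) := by exact_mod_cast ha.2
    constructor
    · exact le_trans (div_nonneg h0 hm'.le) hu.1
    · exact lt_of_lt_of_le hu.2 ((div_le_one hm').mpr h1)
  rw [Measure.restrict_apply (stripSet_measurable m hm S),
    Set.inter_eq_self_of_subset_left hsub, stripSet_eq m hm]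
  rw [measure_biUnion_finset ?_ (fun a _ => measurableSet_Ico)]
  · have : ∀ a ∈ S, volume (Set.Ico ((a:ℝ)/m) (((a:ℝ)+1)/m)) = ENNReal.ofReal (1/m) := by
      intro a _
      rw [Real.volume_Ico]
      congr 1
      field_simp
      ring
    rw [Finset.sum_congr rfl this, Finset.sum_const, nsmul_eq_mul,
      ← ENNReal.ofReal_natCast, ← ENNReal.ofReal_mul (by positivity)]
    congr 1
    ring
  · intro a haS b hbS hab
    have : Set.Ico ((a:ℝ)/m) (((a:ℝ)+1)/m) = {u : ℝ | ⌊(m:ℝ) * u⌋ = a} := (strip_eq m hm a).symm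
    have hb : Set.Ico ((b:ℝ)/m) (((b:ℝ)+1)/m) = {u : ℝ | ⌊(m:ℝ) * u⌋ = b} := (strip_eq m hm b).symm
    rw [Function.onFun, this, hb]
    exact Set.disjoint_left.mpr fun u h1 h2 => hab (by rw [← h1, ← h2])

/-- Probabilistic core of the strip-covering proposition: for `n` points with
independent uniform coordinates in `d` dimensions, the probability that some set of
`s` points hits at most `k` of the `m` strips in every dimension is at most
`(n choose s)·(m choose k)^d·(k/m)^(d·s)`. -/
theorem strip_covering_union_bound (d n m s k : ℕ)
    (hd : 0 < d) (hn : 0 < n) (hm : 0 < m) (hs : 0 < s) (hk : 0 < k)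
    (hkm : k ≤ m) (hsn : s ≤ n) :
    (Measure.pi (fun _ : Fin n × Fin d => volume.restrict (Set.Ico (0 : ℝ) 1)))
      {x : Fin n × Fin d → ℝ | ∃ T : Finset (Fin n), T.card = s ∧
        ∀ i : Fin d, (T.image (fun t => ⌊(m : ℝ) * x (t, i)⌋)).card ≤ k} ≤
      ENNReal.ofReal ((n.choose s : ℝ) * (m.choose k : ℝ) ^ d * ((k : ℝ) / m) ^ (d * s)) := by
    classical
  set ν : Measure ℝ := volume.restrict (Set.Ico (0 : ℝ) 1) with hν
  haveI hνprob : IsProbabilityMeasure ν := ⟨by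
    rw [hν, Measure.restrict_apply_univ, Real.volume_Ico]; norm_num⟩
  set μ : Measure (Fin n × Fin d → ℝ) := Measure.pi (fun _ => ν) with hμ
  set box : Set (Fin n × Fin d → ℝ) := Set.univ.pi (fun _ => Set.Ico (0:ℝ) 1) with hbox
  have hboxm : MeasurableSet box := MeasurableSet.univ_pi (fun _ => measurableSet_Ico)
  have hboxone : μ box = 1 := by
    rw [hμ, hbox, Measure.pi_pi]
    simp [hν, Measure.restrict_apply_self, Real.volume_Ico]
  have hboxc : μ boxᶜ = 0 := by
    rw [measure_compl hboxm (by rw [hboxone]; exact ENNReal.one_ne_top), hboxone,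
      measure_univ, tsub_self]
  -- families
  set 𝒮 : Finset (Fin d → Finset ℤ) :=
    Fintype.piFinset (fun _ : Fin d => (Finset.Ico (0:ℤ) (m:ℤ)).powersetCard k) with h𝒮
  set 𝒯 : Finset (Finset (Fin n)) := Finset.univ.powersetCard s with h𝒯
  set G : Finset (Fin n) → (Fin d → Finset ℤ) → Set (Fin n × Fin d → ℝ) :=
    fun T S => Set.univ.pi (fun j => if j.1 ∈ T then {u : ℝ | ⌊(m:ℝ) * u⌋ ∈ S j.2} else Set.univ)
    with hG
  -- covering
  have hcover : {x : Fin n × Fin d → ℝ | ∃ T : Finset (Fin n), T.card = s ∧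
        ∀ i : Fin d, (T.image (fun t => ⌊(m : ℝ) * x (t, i)⌋)).card ≤ k} ⊆
      (⋃ T ∈ 𝒯, ⋃ S ∈ 𝒮, G T S) ∪ boxᶜ := by
    intro x hx
    by_cases hxb : x ∈ box
    · left
      obtain ⟨T, hTcard, hTk⟩ := hx
      have himg : ∀ i : Fin d, (T.image (fun t => ⌊(m : ℝ) * x (t, i)⌋)) ⊆
          Finset.Ico (0:ℤ) (m:ℤ) := by
        intro i a ha
        obtain ⟨t, htT, rfl⟩ := Finset.mem_image.mp ha
        have hxt : x (t, i) ∈ Set.Ico (0:ℝ) 1 := hxb (t, i) trivial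
        rw [Finset.mem_Ico]
        constructor
        · exact Int.floor_nonneg.mpr (mul_nonneg (by positivity) hxt.1)
        · rw [Int.floor_lt]
          push_cast
          nlinarith [hxt.1, hxt.2, (show (0:ℝ) < m by exact_mod_cast hm)]
      have hcard : ∀ i : Fin d, ∃ S : Finset ℤ,
          (T.image (fun t => ⌊(m : ℝ) * x (t, i)⌋)) ⊆ S ∧
          S ⊆ Finset.Ico (0:ℤ) (m:ℤ) ∧ S.card = k := by
        intro i
        exact Finset.exists_subsuperset_card_eq (himg i) (hTk i)
          (by simpa using hkm)
      choose S hS1 hS2 hS3 using hcard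
      refine Set.mem_iUnion₂.mpr ⟨T, ?_, Set.mem_iUnion₂.mpr ⟨S, ?_, ?_⟩⟩
      · rw [h𝒯, Finset.mem_powersetCard]
        exact ⟨Finset.subset_univ T, hTcard⟩
      · rw [h𝒮, Fintype.mem_piFinset]
        intro i
        exact Finset.mem_powersetCard.mpr ⟨hS2 i, hS3 i⟩
      · intro j _
        simp only [hG]
        by_cases hjT : j.1 ∈ T
        · simp only [if_pos hjT]
          exact hS1 j.2 (Finset.mem_image_of_mem _ hjT)
        · simp only [if_neg hjT]
          trivial
    · right; exact hxb
  -- measure of each G T S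
  have hGmeas : ∀ T ∈ 𝒯, ∀ S ∈ 𝒮,
      μ (G T S) = (ENNReal.ofReal ((k:ℝ)/m)) ^ (d * s) := by
    intro T hT S hS
    have hTcard : T.card = s := (Finset.mem_powersetCard.mp hT).2
    have hScard : ∀ i, (S i).card = k := fun i =>
      (Finset.mem_powersetCard.mp ((Fintype.mem_piFinset.mp hS) i)).2
    have hSsub : ∀ i, S i ⊆ Finset.Ico (0:ℤ) (m:ℤ) := fun i =>
      (Finset.mem_powersetCard.mp ((Fintype.mem_piFinset.mp hS) i)).1
    rw [hG, hμ, Measure.pi_pi]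
    have hval : ∀ j : Fin n × Fin d,
        ν (if j.1 ∈ T then {u : ℝ | ⌊(m:ℝ) * u⌋ ∈ S j.2} else Set.univ) =
        if j.1 ∈ T then ENNReal.ofReal ((k:ℝ)/m) else 1 := by
      intro j
      by_cases hjT : j.1 ∈ T
      · rw [if_pos hjT, if_pos hjT, hν, measure_stripSet m hm _ (hSsub j.2), hScard j.2]
      · rw [if_neg hjT, if_neg hjT, measure_univ]
    rw [Finset.prod_congr rfl (fun j _ => hval j)]
    rw [Fintype.prod_prod_type]
    have : ∀ t : Fin n, (∏ i : Fin d, if t ∈ T then ENNReal.ofReal ((k:ℝ)/m) else 1) =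
        if t ∈ T then (ENNReal.ofReal ((k:ℝ)/m)) ^ d else 1 := by
      intro t
      by_cases htT : t ∈ T <;> simp [htT]
    rw [Finset.prod_congr rfl (fun t _ => this t), Finset.prod_ite_mem,
      Finset.univ_inter, Finset.prod_const, hTcard, ← pow_mul]
  -- union bound
  have hle : μ {x : Fin n × Fin d → ℝ | ∃ T : Finset (Fin n), T.card = s ∧
        ∀ i : Fin d, (T.image (fun t => ⌊(m : ℝ) * x (t, i)⌋)).card ≤ k} ≤
      ∑ T ∈ 𝒯, ∑ S ∈ 𝒮, μ (G T S) := by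
    calc μ _ ≤ μ ((⋃ T ∈ 𝒯, ⋃ S ∈ 𝒮, G T S) ∪ boxᶜ) := measure_mono hcover
      _ ≤ μ (⋃ T ∈ 𝒯, ⋃ S ∈ 𝒮, G T S) + μ boxᶜ := measure_union_le _ _
      _ = μ (⋃ T ∈ 𝒯, ⋃ S ∈ 𝒮, G T S) := by rw [hboxc, add_zero]
      _ ≤ ∑ T ∈ 𝒯, μ (⋃ S ∈ 𝒮, G T S) := measure_biUnion_finset_le _ _
      _ ≤ ∑ T ∈ 𝒯, ∑ S ∈ 𝒮, μ (G T S) :=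
          Finset.sum_le_sum (fun T _ => measure_biUnion_finset_le _ _)
  have hsum : ∑ T ∈ 𝒯, ∑ S ∈ 𝒮, μ (G T S) =
      (n.choose s : ENNReal) * (m.choose k : ENNReal) ^ d * (ENNReal.ofReal ((k:ℝ)/m)) ^ (d * s) := by
    rw [Finset.sum_congr rfl (fun T hT => Finset.sum_congr rfl (fun S hS => hGmeas T hT S hS))]
    simp only [Finset.sum_const, nsmul_eq_mul]
    have h𝒮card : 𝒮.card = (m.choose k) ^ d := by
      rw [h𝒮, Fintype.card_piFinset]
      simp [Finset.card_powersetCard]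
    have h𝒯card : 𝒯.card = n.choose s := by
      rw [h𝒯, Finset.card_powersetCard, Finset.card_univ, Fintype.card_fin]
    rw [h𝒮card, h𝒯card]
    push_cast
    ring
  refine le_trans hle (le_of_eq ?_)
  rw [hsum, ENNReal.ofReal_mul (by positivity), ENNReal.ofReal_mul (by positivity),
    ENNReal.ofReal_pow (by positivity), ENNReal.ofReal_pow (by positivity),
    ENNReal.ofReal_natCast, ENNReal.ofReal_natCast]
end

section
/- Let G be a finite simple graph with vertex set V, let f : V → ι be any function to a type ι, let D, k be natural numbers and S ⊆ V a set of vertices. Suppose that every vertex v ∈ S has at least D neighbours u in G with f(u) = f(v), and that the image f(S) has at least k elements. Then the external neighbourhood satisfies |N_ext(S)| ≥ k·D − |S|. -/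
/-- Deterministic combination step: if every vertex of `S` has at least `D` neighbours
with the same `f`-value (strip index), and `f(S)` takes at least `k` values, then the
external neighbourhood of `S` has size at least `k·D − |S|`. -/
theorem ext_neighbourhood_lower_bound {V ι : Type*} [Fintype V] [DecidableEq V]
    [DecidableEq ι] (G : SimpleGraph V) [DecidableRel G.Adj]
    (f : V → ι) (D k : ℕ) (S : Finset V)
    (hdeg : ∀ v ∈ S, D ≤ ((G.neighborFinset v).filter (fun u => f u = f v)).card)
    (himg : k ≤ (S.image f).card) :
    (k : ℤ) * D - S.card ≤
      ((Finset.univ.filter (fun u => u ∉ S ∧ ∃ v ∈ S, G.Adj u v)).card : ℤ) := by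
  classical
  set Next := Finset.univ.filter (fun u => u ∉ S ∧ ∃ v ∈ S, G.Adj u v) with hN
  have hrep : ∀ i ∈ S.image f, ∃ v, v ∈ S ∧ f v = i := by
    intro i hi
    rcases Finset.mem_image.mp hi with ⟨v, hv, hfv⟩
    exact ⟨v, hv, hfv⟩
  choose rep hrepS hrepf using hrep
  set T := (S.image f).attach with hT
  set g : {i // i ∈ S.image f} → Finset V :=
    fun i => (G.neighborFinset (rep i.1 i.2)).filter (fun u => f u = i.1) with hg
  have hdisj : ∀ i ∈ T, ∀ j ∈ T, i ≠ j → Disjoint (g i) (g j) := by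
    intro i _ j _ hij
    rw [Finset.disjoint_left]
    intro u hui huj
    simp only [hg, Finset.mem_filter] at hui huj
    exact hij (Subtype.ext (hui.2 ▸ huj.2))
  have hcard : (T.biUnion g).card = ∑ i ∈ T, (g i).card :=
    Finset.card_biUnion hdisj
  have hsub : T.biUnion g ⊆ S ∪ Next := by
    intro u hu
    rcases Finset.mem_biUnion.mp hu with ⟨i, _, hui⟩
    simp only [hg, Finset.mem_filter, SimpleGraph.mem_neighborFinset] at hui
    by_cases hus : u ∈ S
    · exact Finset.mem_union_left _ hus
    · refine Finset.mem_union_right _ ?_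
      simp only [hN, Finset.mem_filter, Finset.mem_univ, true_and]
      exact ⟨hus, rep i.1 i.2, hrepS i.1 i.2, hui.1.symm⟩
  have hDle : ∀ i ∈ T, D ≤ (g i).card := by
    intro i _
    have := hdeg (rep i.1 i.2) (hrepS i.1 i.2)
    simpa [hg, hrepf i.1 i.2] using this
  have hkD : k * D ≤ (T.biUnion g).card := by
    calc k * D ≤ T.card * D := by
          have : T.card = (S.image f).card := Finset.card_attach
          exact Nat.mul_le_mul_right D (this ▸ himg)
      _ = ∑ _i ∈ T, D := by rw [Finset.sum_const, smul_eq_mul, Nat.mul_comm]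
      _ ≤ ∑ i ∈ T, (g i).card := Finset.sum_le_sum hDle
      _ = (T.biUnion g).card := hcard.symm
  have hle : k * D ≤ S.card + Next.card := by
    calc k * D ≤ (T.biUnion g).card := hkD
      _ ≤ (S ∪ Next).card := Finset.card_le_card hsub
      _ ≤ S.card + Next.card := Finset.card_union_le _ _
  have := Int.ofNat_le.mpr hle
  push_cast at this ⊢
  linarith
end

section
/- Let G be a finite simple graph with vertex set V, let d and m be positive integers, let f_1, …, f_d : V → {0, …, m−1} be functions, let D be a natural number and φ : ℕ → ℕ a function. Suppose (i) for every vertex v ∈ V and every i ∈ {1, …, d}, v has at least D neighbours u in G with f_i(u) = f_i(v), and (ii) for every nonempty S ⊆ V there exists i ∈ {1, …, d} such that the image f_i(S) has at least φ(|S|) elements. Then every nonempty S ⊆ V satisfies |N_ext(S)| ≥ φ(|S|)·D − |S|; in particular, if moreover φ(|S|)·D ≥ 2·|S|, then S is a (φ(|S|)·D/(2·|S|))-expanding set. -/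
/-- Deterministic skeleton of the main theorem: if every vertex has at least `D`
same-strip neighbours in each of the `d` coordinate directions, and every nonempty
vertex set `S` spreads over at least `φ(|S|)` strips in some direction, then every
nonempty `S` satisfies `|N_ext(S)| ≥ φ(|S|)·D − |S|`; in particular, when
`φ(|S|)·D ≥ 2·|S|`, the set `S` is `(φ(|S|)·D/(2·|S|))`-expanding. -/
theorem expander_skeleton {V : Type*} [Fintype V] [DecidableEq V]
    (G : SimpleGraph V) [DecidableRel G.Adj]
    (d m : ℕ) (hd : 0 < d) (hm : 0 < m)
    (f : Fin d → V → Fin m) (D : ℕ) (φ : ℕ → ℕ)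
    (h1 : ∀ v : V, ∀ i : Fin d,
      D ≤ ((G.neighborFinset v).filter (fun u => f i u = f i v)).card)
    (h2 : ∀ S : Finset V, S.Nonempty → ∃ i : Fin d, φ S.card ≤ (S.image (f i)).card) :
    ∀ S : Finset V, S.Nonempty →
      ((φ S.card : ℤ) * D - S.card ≤
        ((Finset.univ.filter (fun u => u ∉ S ∧ ∃ v ∈ S, G.Adj u v)).card : ℤ)) ∧
      (2 * S.card ≤ φ S.card * D →
        ((φ S.card * D : ℝ) / (2 * S.card)) * S.card ≤
          ((Finset.univ.filter (fun u => u ∉ S ∧ ∃ v ∈ S, G.Adj u v)).card : ℝ)) := by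
  intro S hS
  set N := Finset.univ.filter (fun u => u ∉ S ∧ ∃ v ∈ S, G.Adj u v) with hN
  have key : φ S.card * D ≤ N.card + S.card := by
    obtain ⟨i, hi⟩ := h2 S hS
    set T := S.image (f i) with hT
    have hchoice : ∀ t ∈ T, ∃ v, v ∈ S ∧ f i v = t := by
      intro t ht
      obtain ⟨v, hv, hvt⟩ := Finset.mem_image.mp ht
      exact ⟨v, hv, hvt⟩
    choose g hg1 hg2 using hchoice
    set B := T.attach.biUnion
      (fun t => (G.neighborFinset (g t.1 t.2)).filter (fun u => f i u = t.1)) with hB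
    have hdisj : ∀ t ∈ T.attach, ∀ t' ∈ T.attach, t ≠ t' →
        Disjoint ((G.neighborFinset (g t.1 t.2)).filter (fun u => f i u = t.1))
          ((G.neighborFinset (g t'.1 t'.2)).filter (fun u => f i u = t'.1)) := by
      intro t _ t' _ htt'
      refine Finset.disjoint_left.mpr ?_
      intro u hu hu'
      have h1' := (Finset.mem_filter.mp hu).2
      have h2' := (Finset.mem_filter.mp hu').2
      exact htt' (Subtype.ext (h1' ▸ h2'))
    have hcardB : T.card * D ≤ B.card := by
      rw [hB, Finset.card_biUnion hdisj]
      have : ∀ t ∈ T.attach,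
          D ≤ ((G.neighborFinset (g t.1 t.2)).filter (fun u => f i u = t.1)).card := by
        intro t _
        have := h1 (g t.1 t.2) i
        rwa [hg2 t.1 t.2] at this
      calc T.card * D = ∑ _t ∈ T.attach, D := by
            rw [Finset.sum_const, Finset.card_attach, smul_eq_mul]
        _ ≤ _ := Finset.sum_le_sum this
    have hsub : B ⊆ N ∪ S := by
      intro u hu
      obtain ⟨t, _, hut⟩ := Finset.mem_biUnion.mp hu
      have hadj : G.Adj (g t.1 t.2) u :=
        (SimpleGraph.mem_neighborFinset _ _ _).mp (Finset.mem_filter.mp hut).1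
      by_cases huS : u ∈ S
      · exact Finset.mem_union_right _ huS
      · refine Finset.mem_union_left _ ?_
        rw [hN, Finset.mem_filter]
        exact ⟨Finset.mem_univ _, huS, g t.1 t.2, hg1 t.1 t.2, hadj.symm⟩
    calc φ S.card * D ≤ T.card * D := Nat.mul_le_mul_right _ hi
      _ ≤ B.card := hcardB
      _ ≤ (N ∪ S).card := Finset.card_le_card hsub
      _ ≤ N.card + S.card := Finset.card_union_le _ _
  constructor
  · have := key
    push_cast
    omega
  · intro hφ
    have hs : (0 : ℝ) < S.card := by
      exact_mod_cast Finset.card_pos.mpr hS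
    have h2N : (φ S.card * D : ℝ) ≤ 2 * N.card := by
      have : φ S.card * D + 2 * S.card ≤ 2 * (N.card + S.card) + φ S.card * D - 2 * S.card := by
        omega
      have hkey : (φ S.card * D : ℝ) ≤ N.card + S.card := by exact_mod_cast key
      have hφ' : (2 * S.card : ℝ) ≤ φ S.card * D := by exact_mod_cast hφ
      linarith
    have heq : ((φ S.card * D : ℝ)) / (2 * S.card) * S.card = (φ S.card * D : ℝ) / 2 := by
      field_simp
    rw [heq]
    push_cast
    linarith
end
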